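/- arXiv:2501.04031 — 4 statements merged into one kernel-verified Lean document; each statement's English description precedes it below -/
import Mathlib

section
/- Let $V$ be a Hilbert space, $s_1 < s_2$, and $\rho$ a nonzero finite positive measure on $[s_1,s_2]$. Define for $v \in H^1((s_1,s_2),V)$ the norm $\|v\|_{\mathbb V,\rho}^2 = \int_{[s_1,s_2]}\|v(s)\|_V^2\,d\rho(s) + \int_{s_1}^{s_2}\|\partial_\lambda v(s)\|_V^2\,ds$ (using the continuous representative). Then $\|\cdot\|_{\mathbb V,\rho}$ is equivalent to the standard norm $\|\cdot\|_{\mathbb V}$ (with $\rho$ replaced by Lebesgue measure): there exist constants $c, C > 0$ depending only on $\rho$, $s_1$, $s_2$ such that $c\|v\|_{\mathbb V} \le \|v\|_{\mathbb V,\rho} \le C\|v\|_{\mathbb V}$ for all $v$. -/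
open MeasureTheory intervalIntegral

/-- For any nonzero finite positive measure `ρ` on `[s₁,s₂]`, the norm
`‖v‖²_{𝕍,ρ} = ∫‖v‖²dρ + ∫‖v'‖²` is equivalent to the standard `H¹` norm, with constants
depending only on `ρ, s₁, s₂`. -/
theorem stmt2 {V : Type*} [NormedAddCommGroup V] [InnerProductSpace ℝ V] [CompleteSpace V]
    (s₁ s₂ : ℝ) (hs : s₁ < s₂) (ρ : Measure ℝ) [IsFiniteMeasure ρ]
    (hρpos : 0 < ρ (Set.Icc s₁ s₂)) :
    ∃ c C : ℝ, 0 < c ∧ 0 < C ∧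
      ∀ v v' : ℝ → V, Continuous v →
        IntervalIntegrable v' volume s₁ s₂ →
        IntervalIntegrable (fun s => ‖v s‖ ^ 2) volume s₁ s₂ →
        IntervalIntegrable (fun s => ‖v' s‖ ^ 2) volume s₁ s₂ →
        (∀ a ∈ Set.Icc s₁ s₂, ∀ b ∈ Set.Icc s₁ s₂, v b = v a + ∫ s in a..b, v' s) →
        c * Real.sqrt ((∫ s in s₁..s₂, ‖v s‖ ^ 2) + ∫ s in s₁..s₂, ‖v' s‖ ^ 2) ≤
            Real.sqrt ((∫ s in Set.Icc s₁ s₂, ‖v s‖ ^ 2 ∂ρ) + ∫ s in s₁..s₂, ‖v' s‖ ^ 2) ∧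
          Real.sqrt ((∫ s in Set.Icc s₁ s₂, ‖v s‖ ^ 2 ∂ρ) + ∫ s in s₁..s₂, ‖v' s‖ ^ 2) ≤
            C * Real.sqrt ((∫ s in s₁..s₂, ‖v s‖ ^ 2) + ∫ s in s₁..s₂, ‖v' s‖ ^ 2) := by
  have hL0 : (0:ℝ) < s₂ - s₁ := sub_pos.mpr hs
  set L : ℝ := s₂ - s₁ with hLdef
  have hρI : 0 < (ρ (Set.Icc s₁ s₂)).toReal :=
    ENNReal.toReal_pos hρpos.ne' (measure_ne_top ρ _)
  set ρI : ℝ := (ρ (Set.Icc s₁ s₂)).toReal with hρIdef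
  set K : ℝ := 2 / L + 2 * L with hKdef
  set K' : ℝ := 2 * L / ρI + 2 * L ^ 2 + 1 with hK'def
  clear_value L ρI K K'
  have hLne : L ≠ 0 := hL0.ne'
  have hρIne : ρI ≠ 0 := hρI.ne'
  have hK0 : 0 < K := by rw [hKdef]; positivity
  have hK'0 : 0 < K' := by rw [hK'def]; positivity
  have hsK' : 0 < Real.sqrt K' := Real.sqrt_pos.mpr hK'0
  have hCpos : 0 < ρI * K + 1 := by linarith [mul_pos hρI hK0]
  refine ⟨1 / Real.sqrt K', Real.sqrt (ρI * K + 1), one_div_pos.mpr hsK',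
    Real.sqrt_pos.mpr hCpos, ?_⟩
  intro v v' hv hv'int hvsq hv'sq hftc
  set A : ℝ := ∫ s in s₁..s₂, ‖v s‖ ^ 2 with hAdef
  set B : ℝ := ∫ s in s₁..s₂, ‖v' s‖ ^ 2 with hBdef
  set R : ℝ := ∫ s in Set.Icc s₁ s₂, ‖v s‖ ^ 2 ∂ρ with hRdef
  have hA0 : 0 ≤ A := intervalIntegral.integral_nonneg hs.le fun s _ => by positivity
  have hB0 : 0 ≤ B := intervalIntegral.integral_nonneg hs.le fun s _ => by positivity
  have hR0 : 0 ≤ R := setIntegral_nonneg measurableSet_Icc fun s _ => by positivity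
  set M : ℝ := ∫ s in s₁..s₂, ‖v' s‖ with hMdef
  have hM0 : 0 ≤ M := intervalIntegral.integral_nonneg hs.le fun s _ => norm_nonneg _
  have hMabs : |(∫ s in s₁..s₂, ‖v' s‖)| = M := abs_of_nonneg hM0
  clear_value A B R M
  -- Cauchy–Schwarz via AM–GM
  have hkey : ∀ t : ℝ, 0 < t → M ≤ t * L / 2 + B / (2 * t) := by
    intro t ht
    rw [hMdef]
    have h1 : IntervalIntegrable (fun s => t / 2 + ‖v' s‖ ^ 2 / (2 * t)) volume s₁ s₂ :=
      intervalIntegrable_const.add (hv'sq.div_const (2 * t))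
    have h2 : (∫ s in s₁..s₂, ‖v' s‖) ≤ ∫ s in s₁..s₂, (t / 2 + ‖v' s‖ ^ 2 / (2 * t)) := by
      refine intervalIntegral.integral_mono_on hs.le hv'int.norm h1 fun x _ => ?_
      have h3 : 0 ≤ (‖v' x‖ - t) ^ 2 := sq_nonneg _
      rw [div_add_div _ _ two_ne_zero (by positivity : (2:ℝ) * t ≠ 0),
        le_div_iff₀ (by positivity)]
      nlinarith
    have h4 : (∫ s in s₁..s₂, (t / 2 + ‖v' s‖ ^ 2 / (2 * t)))
        = t * L / 2 + B / (2 * t) := by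
      rw [intervalIntegral.integral_add intervalIntegrable_const (hv'sq.div_const (2 * t)),
        intervalIntegral.integral_const, intervalIntegral.integral_div, smul_eq_mul,
        ← hLdef, ← hBdef]
      ring
    linarith [h2.trans_eq h4]
  have hMsq : M ^ 2 ≤ L * B := by
    rcases eq_or_lt_of_le hM0 with h | h
    · nlinarith [mul_nonneg hL0.le hB0]
    · have hk := hkey (M / L) (by positivity)
      have e1 : M / L * L / 2 = M / 2 := by field_simp
      have e2 : B / (2 * (M / L)) = B * L / (2 * M) := by
        rw [show (2 * (M / L)) = 2 * M / L by ring, div_div_eq_mul_div]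
      rw [e1, e2] at hk
      have h7 : M / 2 ≤ B * L / (2 * M) := by linarith
      have h8 := (div_le_div_iff₀ two_pos (by positivity : (0:ℝ) < 2 * M)).mp h7
      nlinarith
  -- difference bound
  have hMnorm : ∀ a ∈ Set.Icc s₁ s₂, ∀ b ∈ Set.Icc s₁ s₂, ‖v b - v a‖ ≤ M := by
    intro a ha b hb
    rw [hftc a ha b hb]
    simp only [add_sub_cancel_left]
    calc ‖∫ s in a..b, v' s‖ ≤ |∫ s in a..b, ‖v' s‖| :=
          intervalIntegral.norm_integral_le_abs_integral_norm
      _ ≤ |∫ s in s₁..s₂, ‖v' s‖| := by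
          refine intervalIntegral.abs_integral_mono_interval ?_
            (Filter.Eventually.of_forall fun x => norm_nonneg _) hv'int.norm
          rw [Set.uIoc_of_le hs.le, Set.uIoc]
          exact Set.Ioc_subset_Ioc (le_min ha.1 hb.1) (max_le ha.2 hb.2)
      _ = M := hMabs
  have hpt : ∀ a ∈ Set.Icc s₁ s₂, ∀ b ∈ Set.Icc s₁ s₂,
      ‖v b‖ ^ 2 ≤ 2 * ‖v a‖ ^ 2 + 2 * M ^ 2 := by
    intro a ha b hb
    have h1 : ‖v b‖ ≤ ‖v a‖ + M := by
      have h2 : ‖v b‖ = ‖v a + (v b - v a)‖ := by congr 1; abel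
      rw [h2]
      calc ‖v a + (v b - v a)‖ ≤ ‖v a‖ + ‖v b - v a‖ := norm_add_le _ _
        _ ≤ ‖v a‖ + M := by linarith [hMnorm a ha b hb]
    nlinarith [norm_nonneg (v b), norm_nonneg (v a), sq_nonneg (‖v a‖ - M)]
  have hvInt : IntegrableOn (fun s => ‖v s‖ ^ 2) (Set.Icc s₁ s₂) ρ :=
    ((hv.norm.pow 2).continuousOn).integrableOn_compact isCompact_Icc
  -- sup bound
  have hsup : ∀ b ∈ Set.Icc s₁ s₂, ‖v b‖ ^ 2 ≤ K * (A + B) := by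
    intro b hb
    have h2 : (∫ _ in s₁..s₂, ‖v b‖ ^ 2) ≤
        ∫ a in s₁..s₂, (2 * ‖v a‖ ^ 2 + 2 * M ^ 2) :=
      intervalIntegral.integral_mono_on hs.le intervalIntegrable_const
        ((hvsq.const_mul 2).add intervalIntegrable_const) fun a ha => hpt a ha b hb
    rw [intervalIntegral.integral_const,
      intervalIntegral.integral_add (hvsq.const_mul 2) intervalIntegrable_const,
      intervalIntegral.integral_const_mul, intervalIntegral.integral_const,
      smul_eq_mul, smul_eq_mul, ← hLdef, ← hAdef] at h2
    have h1 : L * ‖v b‖ ^ 2 ≤ 2 * A + 2 * L * (L * B) := by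
      have hint : 2 * L * M ^ 2 ≤ 2 * L * (L * B) :=
        mul_le_mul_of_nonneg_left hMsq (by positivity)
      linarith
    have hc : L * (2 / L) = 2 := by rw [mul_comm L (2 / L), div_mul_cancel₀ _ hLne]
    have hgoal : L * (K * (A + B)) = (2 + 2 * L ^ 2) * (A + B) := by
      rw [hKdef]; linear_combination (A + B) * hc
    refine le_of_mul_le_mul_left ?_ hL0
    rw [hgoal]
    have h9 : 0 ≤ 2 * L ^ 2 * A := mul_nonneg (by positivity) hA0
    linarith
  have hRbound : R ≤ ρI * (K * (A + B)) := by
    have h := setIntegral_mono_on hvInt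
      (integrableOn_const (measure_lt_top ρ _).ne) measurableSet_Icc hsup
    rwa [setIntegral_const, smul_eq_mul, measureReal_def, ← hρIdef, ← hRdef] at h
  -- lower bound
  have hlow : ∀ a ∈ Set.Icc s₁ s₂, ρI * ‖v a‖ ^ 2 ≤ 2 * R + ρI * (2 * M ^ 2) := by
    intro a ha
    have h := setIntegral_mono_on
      (integrableOn_const (measure_lt_top ρ _).ne)
      ((hvInt.const_mul 2).add (integrableOn_const (measure_lt_top ρ _).ne))
      measurableSet_Icc (fun b hb => hpt b hb a ha)
    have hadd : (∫ b in Set.Icc s₁ s₂, (2 * ‖v b‖ ^ 2 + 2 * M ^ 2) ∂ρ)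
        = (∫ b in Set.Icc s₁ s₂, 2 * ‖v b‖ ^ 2 ∂ρ) + ∫ _ in Set.Icc s₁ s₂, 2 * M ^ 2 ∂ρ :=
      integral_add (hvInt.const_mul 2) (integrableOn_const (measure_lt_top ρ _).ne)
    simp only [Pi.add_apply] at h
    rw [setIntegral_const, smul_eq_mul, measureReal_def, ← hρIdef, hadd, MeasureTheory.integral_const_mul,
      setIntegral_const, smul_eq_mul, measureReal_def, ← hρIdef, ← hRdef] at h
    linarith
  have hAbound : A ≤ L * (2 * R / ρI + 2 * L * B) := by
    have hptA : ∀ a ∈ Set.Icc s₁ s₂, ‖v a‖ ^ 2 ≤ 2 * R / ρI + 2 * L * B := by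
      intro a ha
      have heq : ρI * (2 * R / ρI + 2 * L * B) = 2 * R + ρI * (2 * (L * B)) := by
        rw [mul_add, mul_comm ρI (2 * R / ρI), div_mul_cancel₀ _ hρIne]; ring
      refine le_of_mul_le_mul_left ?_ hρI
      rw [heq]
      have h10 := hlow a ha
      have h11 : 2 * ρI * M ^ 2 ≤ 2 * ρI * (L * B) :=
        mul_le_mul_of_nonneg_left hMsq (by positivity)
      linarith
    have h := intervalIntegral.integral_mono_on hs.le hvsq intervalIntegrable_const hptA
    rw [intervalIntegral.integral_const, smul_eq_mul, ← hLdef, ← hAdef] at h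
    linarith
  have hsum : A + B ≤ K' * (R + B) := by
    have hA' : A ≤ 2 * L / ρI * R + 2 * L ^ 2 * B := by
      have heq : L * (2 * R / ρI + 2 * L * B) = 2 * L / ρI * R + 2 * L ^ 2 * B := by
        ring
      linarith [hAbound.trans_eq heq]
    rw [hK'def]
    have h1 : 0 ≤ 2 * L / ρI := by positivity
    linarith [mul_nonneg h1 hB0, mul_nonneg (by positivity : (0:ℝ) ≤ 2 * L ^ 2) hR0]
  constructor
  · have h1 : Real.sqrt (A + B) ≤ Real.sqrt K' * Real.sqrt (R + B) := by
      rw [← Real.sqrt_mul hK'0.le]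
      exact Real.sqrt_le_sqrt hsum
    calc 1 / Real.sqrt K' * Real.sqrt (A + B)
        ≤ 1 / Real.sqrt K' * (Real.sqrt K' * Real.sqrt (R + B)) := by
          exact mul_le_mul_of_nonneg_left h1 (by positivity)
      _ = Real.sqrt (R + B) := by
          rw [← mul_assoc, one_div_mul_cancel hsK'.ne', one_mul]
  · have h2 : R + B ≤ (ρI * K + 1) * (A + B) := by linarith [hRbound, hA0]
    calc Real.sqrt (R + B) ≤ Real.sqrt ((ρI * K + 1) * (A + B)) := Real.sqrt_le_sqrt h2
      _ = Real.sqrt (ρI * K + 1) * Real.sqrt (A + B) := Real.sqrt_mul hCpos.le _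
end

section
/- Let $V$ be a Hilbert space, $s_1<s_2$, $\rho$ a nonzero finite positive measure on $[s_1,s_2]$ with total mass $|\rho|$, and $v \in H^1((s_1,s_2),V)$ with continuous representative. Then for every $\lambda \in [s_1,s_2]$: $v(\lambda) = \frac{1}{|\rho|}\int_{[s_1,s_2]} v(s)\,d\rho(s) + \int_{s_1}^{s_2} q_\rho(\lambda,u)\,\partial_\lambda v(u)\,du$, where $q_\rho(\lambda,u) = \rho([s_1,u))/|\rho|$ if $u < \lambda$ and $q_\rho(\lambda,u) = -\rho([u,s_2])/|\rho|$ if $u \ge \lambda$. -/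
open MeasureTheory intervalIntegral

private lemma stmt3_meas_union_null {α : Type*} [MeasurableSpace α] {ρ : MeasureTheory.Measure α}
    {s t : Set α} (ht : ρ t = 0) : ρ (s ∪ t) = ρ s :=
  le_antisymm ((measure_union_le s t).trans (by simp [ht])) (measure_mono Set.subset_union_left)

/-- representation formula
`v(λ) = |ρ|⁻¹ ∫ v dρ + ∫_{s₁}^{s₂} q_ρ(λ,u) ∂v(u) du`, where
`q_ρ(λ,u) = ρ([s₁,u))/|ρ|` for `u < λ` and `q_ρ(λ,u) = -ρ([u,s₂])/|ρ|` for `u ≥ λ`. -/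
theorem stmt3 {V : Type*} [NormedAddCommGroup V] [InnerProductSpace ℝ V] [CompleteSpace V]
    (s₁ s₂ : ℝ) (hs : s₁ < s₂) (ρ : Measure ℝ) [IsFiniteMeasure ρ]
    (hsupp : ρ (Set.Icc s₁ s₂)ᶜ = 0) (hρpos : 0 < ρ (Set.Icc s₁ s₂))
    (v v' : ℝ → V) (hc : Continuous v)
    (hρint : Integrable v (ρ.restrict (Set.Icc s₁ s₂)))
    (hv'int : IntervalIntegrable v' volume s₁ s₂)
    (hftc : ∀ a ∈ Set.Icc s₁ s₂, ∀ b ∈ Set.Icc s₁ s₂, v b = v a + ∫ s in a..b, v' s)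
    (lam : ℝ) (hlam : lam ∈ Set.Icc s₁ s₂) :
    v lam = (ρ (Set.Icc s₁ s₂)).toReal⁻¹ • (∫ s in Set.Icc s₁ s₂, v s ∂ρ) +
      ∫ u in s₁..s₂,
        (if u < lam then (ρ (Set.Ico s₁ u)).toReal / (ρ (Set.Icc s₁ s₂)).toReal
          else -((ρ (Set.Icc u s₂)).toReal / (ρ (Set.Icc s₁ s₂)).toReal)) • v' u := by
  obtain ⟨hl1, hl2⟩ := hlam
  set M : ℝ := (ρ (Set.Icc s₁ s₂)).toReal with hMdef
  have hMpos : 0 < M := ENNReal.toReal_pos hρpos.ne' (measure_ne_top ρ _)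
  set μ : Measure ℝ := ρ.restrict (Set.Icc s₁ s₂) with hμdef
  have hμfin : IsFiniteMeasure μ := by rw [hμdef]; infer_instance
  -- the primitive
  set G : ℝ → V := fun s => ∫ u in s..lam, v' u with hGdef
  have hGcont : ContinuousOn G (Set.Icc s₁ s₂) := by
    have h1 : lam ∈ Set.uIcc s₁ s₂ := by
      rw [Set.uIcc_of_le hs.le]; exact ⟨hl1, hl2⟩
    have h2 := (intervalIntegral.continuousOn_primitive_interval' hv'int h1).neg
    rw [Set.uIcc_of_le hs.le] at h2
    refine ContinuousOn.congr h2 fun b _ => ?_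
    simp [hGdef, intervalIntegral.integral_symm lam b]
  have hGint : Integrable G μ := hGcont.integrableOn_compact isCompact_Icc
  -- Step 1: averaging the FTC identity
  have key1 : M • v lam = (∫ s in Set.Icc s₁ s₂, v s ∂ρ) + ∫ s in Set.Icc s₁ s₂, G s ∂ρ := by
    have h0 : ∫ s in Set.Icc s₁ s₂, v lam ∂ρ = M • v lam := setIntegral_const (v lam)
    rw [← h0,
      setIntegral_congr_fun measurableSet_Icc
        (fun s hs' => hftc s hs' lam ⟨hl1, hl2⟩ : Set.EqOn (fun _ => v lam) (fun s => v s + G s) _)]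
    exact integral_add hρint hGint
  -- the kernel
  set c : ℝ → ℝ → ℝ := fun s u =>
    (if s ≤ u ∧ u < lam then (1:ℝ) else 0) - (if lam ≤ u ∧ u < s then (1:ℝ) else 0) with hcdef
  have hcabs : ∀ s u, |c s u| ≤ 1 := by
    intro s u; simp only [hcdef]; split_ifs <;> norm_num
  set w : ℝ → V := (Set.Ioc s₁ s₂).indicator v' with hwdef
  have hwint : Integrable w volume := by
    rw [hwdef, integrable_indicator_iff measurableSet_Ioc]
    exact (intervalIntegrable_iff_integrableOn_Ioc_of_le hs.le).mp hv'int
  -- pointwise identity for the primitive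
  have hae_ne : ∀ a : ℝ, ∀ᵐ u : ℝ ∂volume, u ≠ a := fun a => by
    rw [ae_iff]
    simp [Set.setOf_eq_eq_singleton]
  have hGeq : ∀ s ∈ Set.Icc s₁ s₂, G s = ∫ u, c s u • w u := by
    rintro s ⟨hs1, hs2⟩
    rcases le_or_gt s lam with h | h
    · have : ∫ u, c s u • w u = ∫ u, (Set.Ioc s lam).indicator v' u := by
        refine integral_congr_ae ?_
        filter_upwards [hae_ne s, hae_ne lam] with u hus hul
        by_cases hm : u ∈ Set.Ioc s lam
        · obtain ⟨h1, h2⟩ := hm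
          have h2' : u < lam := lt_of_le_of_ne h2 hul
          have hcond : s ≤ u ∧ u < lam := ⟨h1.le, h2'⟩
          have hcond2 : ¬(lam ≤ u ∧ u < s) := fun hh => absurd (hh.1.trans_lt h2') (lt_irrefl _)
          have : c s u = 1 := by
            simp only [hcdef]
            rw [if_pos hcond, if_neg hcond2]
            norm_num
          have hmemA : u ∈ Set.Ioc s lam := ⟨h1, h2⟩
          have hmemB : u ∈ Set.Ioc s₁ s₂ := ⟨hs1.trans_lt h1, h2.trans hl2⟩
          rw [this, one_smul, Set.indicator_of_mem hmemA, hwdef, Set.indicator_of_mem hmemB]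
        · have hcond : ¬(s ≤ u ∧ u < lam) := by
            rintro ⟨hh1, hh2⟩
            exact hm ⟨lt_of_le_of_ne hh1 (Ne.symm hus), hh2.le⟩
          have hcond2 : ¬(lam ≤ u ∧ u < s) := by
            rintro ⟨hh1, hh2⟩
            exact absurd (hh2.trans_le (h.trans hh1)) (lt_irrefl u)
          have : c s u = 0 := by
            simp only [hcdef]
            rw [if_neg hcond, if_neg hcond2, sub_zero]
          rw [this, zero_smul, Set.indicator_of_notMem hm]
      rw [this, MeasureTheory.integral_indicator measurableSet_Ioc]
      show (∫ u in s..lam, v' u) = _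
      exact intervalIntegral.integral_of_le h
    · have : ∫ u, c s u • w u = ∫ u, (-((Set.Ioc lam s).indicator v')) u := by
        refine integral_congr_ae ?_
        filter_upwards [hae_ne s, hae_ne lam] with u hus hul
        simp only [Pi.neg_apply]
        by_cases hm : u ∈ Set.Ioc lam s
        · obtain ⟨h1, h2⟩ := hm
          have h2' : u < s := lt_of_le_of_ne h2 hus
          have hcond : ¬(s ≤ u ∧ u < lam) := fun hh => absurd (hh.2.trans_le h1.le) (lt_irrefl u)
          have hcond2 : lam ≤ u ∧ u < s := ⟨h1.le, h2'⟩
          have : c s u = -1 := by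
            simp only [hcdef]
            rw [if_neg hcond, if_pos hcond2]
            norm_num
          have hmemA : u ∈ Set.Ioc lam s := ⟨h1, h2⟩
          have hmemB : u ∈ Set.Ioc s₁ s₂ := ⟨hl1.trans_lt h1, h2.trans hs2⟩
          rw [this, Set.indicator_of_mem hmemA, hwdef, Set.indicator_of_mem hmemB]
          simp
        · have hcond : ¬(s ≤ u ∧ u < lam) := by
            rintro ⟨hh1, hh2⟩
            exact absurd (h.trans_le hh1) (not_lt.mpr hh2.le)
          have hcond2 : ¬(lam ≤ u ∧ u < s) := by
            rintro ⟨hh1, hh2⟩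
            exact hm ⟨lt_of_le_of_ne hh1 (Ne.symm hul), hh2.le⟩
          have : c s u = 0 := by
            simp only [hcdef]
            rw [if_neg hcond, if_neg hcond2, sub_zero]
          rw [this, zero_smul, Set.indicator_of_notMem hm, neg_zero]
      rw [this]
      simp only [Pi.neg_apply]
      rw [MeasureTheory.integral_neg, MeasureTheory.integral_indicator measurableSet_Ioc]
      show (∫ u in s..lam, v' u) = _
      rw [intervalIntegral.integral_symm lam s, intervalIntegral.integral_of_le h.le]
  -- product integrability
  have hmeasc : Measurable (fun z : ℝ × ℝ => c z.1 z.2) := by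
    apply Measurable.sub
    · exact Measurable.ite
        ((measurableSet_le measurable_fst measurable_snd).inter
          (measurableSet_lt measurable_snd measurable_const)) measurable_const measurable_const
    · exact Measurable.ite
        ((measurableSet_le measurable_const measurable_snd).inter
          (measurableSet_lt measurable_snd measurable_fst)) measurable_const measurable_const
  have hprodint : Integrable (fun z : ℝ × ℝ => c z.1 z.2 • w z.2) (μ.prod volume) := by
    have h1 : Integrable (fun z : ℝ × ℝ => (1:ℝ) • ‖w z.2‖) (μ.prod volume) :=
      (integrable_const (1:ℝ)).smul_prod hwint.norm
    simp only [one_smul] at h1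
    have hwm : AEStronglyMeasurable (fun z : ℝ × ℝ => w z.2) (μ.prod volume) :=
      hwint.1.comp_snd
    refine Integrable.mono' h1 (hmeasc.aestronglyMeasurable.smul hwm) ?_
    filter_upwards with z
    rw [norm_smul]
    calc ‖c z.1 z.2‖ * ‖w z.2‖ ≤ 1 * ‖w z.2‖ :=
          mul_le_mul_of_nonneg_right (hcabs z.1 z.2) (norm_nonneg _)
      _ = ‖w z.2‖ := one_mul _
  -- Fubini
  have hswap : ∫ s, (∫ u, c s u • w u) ∂μ = ∫ u, (∫ s, c s u • w u ∂μ) := by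
    exact MeasureTheory.integral_integral_swap hprodint
  -- inner integral of the kernel
  have hcint : ∀ u : ℝ, ∫ s, c s u ∂μ =
      (if u < lam then (μ (Set.Iic u)).toReal else 0) -
      (if lam ≤ u then (μ (Set.Ioi u)).toReal else 0) := by
    intro u
    have e1 : (fun s => if s ≤ u ∧ u < lam then (1:ℝ) else 0) =
        (if u < lam then (Set.Iic u).indicator (fun _ => (1:ℝ)) else 0) := by
      by_cases h : u < lam
      · ext s; simp [h, Set.indicator_apply]
      · ext s; simp [h]
    have e2 : (fun s => if lam ≤ u ∧ u < s then (1:ℝ) else 0) =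
        (if lam ≤ u then (Set.Ioi u).indicator (fun _ => (1:ℝ)) else 0) := by
      by_cases h : lam ≤ u
      · ext s; simp [h, Set.indicator_apply]
      · ext s; simp [h]
    have i1 : Integrable (fun s => if s ≤ u ∧ u < lam then (1:ℝ) else 0) μ := by
      rw [e1]; split_ifs
      · exact (integrable_const (1:ℝ)).indicator measurableSet_Iic
      · exact integrable_zero _ _ _
    have i2 : Integrable (fun s => if lam ≤ u ∧ u < s then (1:ℝ) else 0) μ := by
      rw [e2]; split_ifs
      · exact (integrable_const (1:ℝ)).indicator measurableSet_Ioi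
      · exact integrable_zero _ _ _
    simp only [hcdef]
    rw [integral_sub i1 i2]
    congr 1
    · rw [e1]; split_ifs
      · rw [integral_indicator_const _ measurableSet_Iic, smul_eq_mul, mul_one, measureReal_def]
      · simp
    · rw [e2]; split_ifs
      · rw [integral_indicator_const _ measurableSet_Ioi, smul_eq_mul, mul_one, measureReal_def]
      · simp
  -- a.e. atoms
  have hcntble : Set.Countable {u : ℝ | ρ {u} ≠ 0} := by
    have h := Measure.countable_meas_pos_of_disjoint_iUnion (μ := ρ)
      (As := fun u : ℝ => {u}) (fun u => measurableSet_singleton u)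
      (fun i j hij => by simp [Function.onFun, Set.disjoint_singleton, hij])
    refine h.mono fun u hu => ?_
    exact pos_iff_ne_zero.mpr hu
  have hatom : ∀ᵐ u : ℝ ∂volume, ρ {u} = 0 := by
    rw [ae_iff]
    exact hcntble.measure_zero volume
  -- the unnormalized kernel value
  set k : ℝ → ℝ := fun u =>
    if u < lam then (ρ (Set.Ico s₁ u)).toReal else -(ρ (Set.Icc u s₂)).toReal with hkdef
  have key2 : ∫ s in Set.Icc s₁ s₂, G s ∂ρ = ∫ u in s₁..s₂, k u • v' u := by
    have step1 : ∫ s in Set.Icc s₁ s₂, G s ∂ρ = ∫ s, (∫ u, c s u • w u) ∂μ :=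
      setIntegral_congr_fun measurableSet_Icc hGeq
    have step2 : ∀ u : ℝ, (∫ s, c s u • w u ∂μ) = (∫ s, c s u ∂μ) • w u := fun u =>
      integral_smul_const _ _
    have step3 : ∀ u : ℝ, (∫ s, c s u ∂μ) • w u =
        (Set.Ioc s₁ s₂).indicator (fun u => (∫ s, c s u ∂μ) • v' u) u := by
      intro u
      by_cases hm : u ∈ Set.Ioc s₁ s₂
      · rw [Set.indicator_of_mem hm, hwdef, Set.indicator_of_mem hm]
      · rw [Set.indicator_of_notMem hm, hwdef, Set.indicator_of_notMem hm, smul_zero]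
    rw [step1, hswap]
    simp only [step2]
    rw [integral_congr_ae (Filter.Eventually.of_forall step3),
      MeasureTheory.integral_indicator measurableSet_Ioc]
    rw [intervalIntegral.integral_of_le hs.le]
    refine setIntegral_congr_ae measurableSet_Ioc ?_
    filter_upwards [hatom] with u hu0 hm
    obtain ⟨hm1, hm2⟩ := hm
    congr 1
    rw [hcint u]
    simp only [hkdef]
    by_cases h : u < lam
    · rw [if_pos h, if_neg (not_le.mpr h), if_pos h, sub_zero, hμdef,
        Measure.restrict_apply measurableSet_Iic]
      have hset : Set.Iic u ∩ Set.Icc s₁ s₂ = Set.Icc s₁ u := by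
        ext x
        simp only [Set.mem_inter_iff, Set.mem_Iic, Set.mem_Icc]
        exact ⟨fun ⟨h1, h2, _⟩ => ⟨h2, h1⟩, fun ⟨h1, h2⟩ => ⟨h2, h1, h2.trans hm2⟩⟩
      rw [hset, ← Set.Ico_union_right hm1.le, stmt3_meas_union_null hu0]
    · rw [if_neg h, if_neg h, if_pos (not_lt.mp h), zero_sub, hμdef,
        Measure.restrict_apply measurableSet_Ioi]
      have hset : Set.Ioi u ∩ Set.Icc s₁ s₂ = Set.Ioc u s₂ := by
        ext x
        simp only [Set.mem_inter_iff, Set.mem_Ioi, Set.mem_Icc, Set.mem_Ioc]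
        exact ⟨fun ⟨h1, _, h3⟩ => ⟨h1, h3⟩, fun ⟨h1, h2⟩ => ⟨h1, hm1.le.trans h1.le, h2⟩⟩
      rw [hset]
      congr 2
      rw [← Set.Ioc_insert_left hm2, Set.insert_eq, Set.union_comm, stmt3_meas_union_null hu0]
  -- assemble
  have main : M • v lam = (∫ s in Set.Icc s₁ s₂, v s ∂ρ) + ∫ u in s₁..s₂, k u • v' u := by
    rw [key1, key2]
  have hq : ∀ u : ℝ,
      (if u < lam then (ρ (Set.Ico s₁ u)).toReal / M
        else -((ρ (Set.Icc u s₂)).toReal / M)) • v' u = M⁻¹ • (k u • v' u) := by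
    intro u
    simp only [hkdef]
    split_ifs with h
    · rw [div_eq_inv_mul, mul_smul]
    · rw [smul_smul]
      congr 1
      rw [← neg_div, div_eq_inv_mul]
  calc v lam = M⁻¹ • (M • v lam) := by
        rw [smul_smul, inv_mul_cancel₀ hMpos.ne', one_smul]
    _ = M⁻¹ • (∫ s in Set.Icc s₁ s₂, v s ∂ρ) + M⁻¹ • ∫ u in s₁..s₂, k u • v' u := by
        rw [main, smul_add]
    _ = M⁻¹ • (∫ s in Set.Icc s₁ s₂, v s ∂ρ) +
        ∫ u in s₁..s₂,
          (if u < lam then (ρ (Set.Ico s₁ u)).toReal / M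
            else -((ρ (Set.Icc u s₂)).toReal / M)) • v' u := by
        congr 1
        rw [intervalIntegral.integral_congr (fun u _ => hq u), intervalIntegral.integral_smul]
end

section
/- Let $V$ be a Hilbert space, $s_1<s_2$, and $\rho$ a nonzero finite positive measure on $[s_1,s_2]$. Then for every $v \in H^1((s_1,s_2),V)$ (with continuous representative), $\sup_{\lambda\in[s_1,s_2]}\|v(\lambda)\|_V \le M\left(\int_{[s_1,s_2]}\|v(s)\|_V^2\,d\rho(s) + \int_{s_1}^{s_2}\|\partial_\lambda v(s)\|_V^2\,ds\right)^{1/2}$, where $M = \sqrt{2}\max\left(\frac{1}{\sqrt{|\rho|}},\sqrt{s_2-s_1}\right)$ and $|\rho| = \rho([s_1,s_2])$. -/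
open MeasureTheory intervalIntegral

/-- sup bound: `sup_{λ∈[s₁,s₂]} ‖v(λ)‖ ≤ M ‖v‖_{𝕍,ρ}` with
`M = √2 max(1/√|ρ|, √(s₂-s₁))`. -/
theorem stmt4 {V : Type*} [NormedAddCommGroup V] [InnerProductSpace ℝ V] [CompleteSpace V]
    (s₁ s₂ : ℝ) (hs : s₁ < s₂) (ρ : Measure ℝ) [IsFiniteMeasure ρ]
    (hρpos : 0 < ρ (Set.Icc s₁ s₂))
    (v v' : ℝ → V) (hc : Continuous v)
    (hv'int : IntervalIntegrable v' volume s₁ s₂)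
    (hv'2 : IntervalIntegrable (fun s => ‖v' s‖ ^ 2) volume s₁ s₂)
    (hftc : ∀ a ∈ Set.Icc s₁ s₂, ∀ b ∈ Set.Icc s₁ s₂, v b = v a + ∫ s in a..b, v' s)
    (lam : ℝ) (hlam : lam ∈ Set.Icc s₁ s₂) :
    ‖v lam‖ ≤ Real.sqrt 2 * max (1 / Real.sqrt (ρ (Set.Icc s₁ s₂)).toReal) (Real.sqrt (s₂ - s₁)) *
      Real.sqrt ((∫ s in Set.Icc s₁ s₂, ‖v s‖ ^ 2 ∂ρ) + ∫ s in s₁..s₂, ‖v' s‖ ^ 2) := by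
  set r : ℝ := (ρ (Set.Icc s₁ s₂)).toReal with hr_def
  have hr : 0 < r := ENNReal.toReal_pos hρpos.ne' (measure_ne_top ρ _)
  set d : ℝ := s₂ - s₁ with hd_def
  have hd : 0 < d := sub_pos.2 hs
  set A : ℝ := ∫ s in Set.Icc s₁ s₂, ‖v s‖ ^ 2 ∂ρ with hA_def
  set B : ℝ := ∫ s in s₁..s₂, ‖v' s‖ ^ 2 with hB_def
  set C : ℝ := ∫ s in s₁..s₂, ‖v' s‖ with hC_def
  have hA : 0 ≤ A := integral_nonneg fun s => sq_nonneg _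
  have hB : 0 ≤ B := intervalIntegral.integral_nonneg hs.le fun u _ => sq_nonneg _
  have hC : 0 ≤ C := intervalIntegral.integral_nonneg hs.le fun u _ => norm_nonneg _
  -- Cauchy–Schwarz : C ^ 2 ≤ B * d
  have hμfin : IsFiniteMeasure (volume.restrict (Set.Ioc s₁ s₂)) := by
    constructor
    rw [Measure.restrict_apply MeasurableSet.univ, Set.univ_inter, Real.volume_Ioc]
    exact ENNReal.ofReal_lt_top
  have hmf : AEStronglyMeasurable (fun s => ‖v' s‖) (volume.restrict (Set.Ioc s₁ s₂)) :=
    hv'int.1.aestronglyMeasurable.norm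
  have hfmem : MemLp (fun s => ‖v' s‖) 2 (volume.restrict (Set.Ioc s₁ s₂)) :=
    (memLp_two_iff_integrable_sq hmf).2 hv'2.1
  have hgmem : MemLp (fun _ : ℝ => (1 : ℝ)) 2 (volume.restrict (Set.Ioc s₁ s₂)) :=
    memLp_const 1
  have hpq : (2 : ℝ).HolderConjugate 2 := by constructor <;> norm_num
  have hCS : C ≤ Real.sqrt B * Real.sqrt d := by
    have h := integral_mul_le_Lp_mul_Lq_of_nonneg hpq
      (ae_of_all _ fun x => norm_nonneg (v' x)) (ae_of_all _ fun _ => zero_le_one)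
      (by simpa using hfmem) (by simpa using hgmem)
    simp only [mul_one] at h
    have e1 : (∫ a in Set.Ioc s₁ s₂, ‖v' a‖ ^ (2:ℝ)) = B := by
      rw [hB_def, intervalIntegral.integral_of_le hs.le]
      refine integral_congr_ae (ae_of_all _ fun x => ?_)
      show ‖v' x‖ ^ (2:ℝ) = ‖v' x‖ ^ (2:ℕ)
      rw [show ((2:ℝ) = ((2:ℕ):ℝ)) by norm_num, Real.rpow_natCast]
    have e2 : (∫ _ in Set.Ioc s₁ s₂, (1:ℝ) ^ (2:ℝ)) = d := by
      simp [Real.volume_Ioc, ENNReal.toReal_ofReal hd.le, hs.le, hd_def]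
    have e3 : C = ∫ a in Set.Ioc s₁ s₂, ‖v' a‖ := by
      rw [hC_def, intervalIntegral.integral_of_le hs.le]
    rw [e1, e2] at h
    rw [e3]
    calc (∫ a in Set.Ioc s₁ s₂, ‖v' a‖) ≤ B ^ (1/(2:ℝ)) * d ^ (1/(2:ℝ)) := h
      _ = Real.sqrt B * Real.sqrt d := by
          rw [Real.sqrt_eq_rpow, Real.sqrt_eq_rpow]
  have hC2 : C ^ 2 ≤ B * d := by
    nlinarith [Real.sq_sqrt hB, Real.sq_sqrt hd.le, Real.sqrt_nonneg B, Real.sqrt_nonneg d]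
  -- pointwise bound
  have key : ∀ s ∈ Set.Icc s₁ s₂, ‖v lam‖ ^ 2 ≤ 2 * ‖v s‖ ^ 2 + 2 * (d * B) := by
    intro s hsmem
    have h1 := hftc s hsmem lam hlam
    have hsub : Set.uIoc s lam ⊆ Set.uIoc s₁ s₂ := by
      simp only [Set.uIoc]
      exact Set.Ioc_subset_Ioc
        ((min_le_left s₁ s₂).trans (le_min hsmem.1 hlam.1))
        ((max_le hsmem.2 hlam.2).trans (le_max_right s₁ s₂))
    have h2 : ‖v lam‖ ≤ ‖v s‖ + C := by
      rw [h1]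
      refine (norm_add_le _ _).trans (add_le_add_right ?_ _)
      calc ‖∫ x in s..lam, v' x‖ ≤ |∫ x in s..lam, ‖v' x‖| :=
            intervalIntegral.norm_integral_le_abs_integral_norm
        _ ≤ |C| := intervalIntegral.abs_integral_mono_interval hsub
            (ae_of_all _ fun x => norm_nonneg (v' x)) hv'int.norm
        _ = C := abs_of_nonneg hC
    nlinarith [mul_self_nonneg (‖v s‖ - C), norm_nonneg (v lam), norm_nonneg (v s),
      mul_self_le_mul_self (norm_nonneg (v lam)) h2]
  -- integrate over ρ on Icc
  have hint1 : IntegrableOn (fun s => ‖v s‖ ^ 2) (Set.Icc s₁ s₂) ρ :=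
    ((hc.norm.pow 2).continuousOn).integrableOn_compact isCompact_Icc
  have hconst : IntegrableOn (fun _ : ℝ => 2 * (d * B)) (Set.Icc s₁ s₂) ρ :=
    integrableOn_const (measure_ne_top ρ _)
  have step : r * ‖v lam‖ ^ 2 ≤ 2 * A + 2 * (d * B) * r := by
    have hmono : (∫ _ in Set.Icc s₁ s₂, ‖v lam‖ ^ 2 ∂ρ) ≤
        ∫ s in Set.Icc s₁ s₂, (2 * ‖v s‖ ^ 2 + 2 * (d * B)) ∂ρ :=
      setIntegral_mono_on (integrableOn_const (measure_ne_top ρ _))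
        ((hint1.const_mul 2).add hconst) measurableSet_Icc key
    rw [setIntegral_const] at hmono
    rw [integral_add (hint1.const_mul 2) hconst, MeasureTheory.integral_const_mul, setIntegral_const] at hmono
    simp only [smul_eq_mul] at hmono
    rw [show ρ.real (Set.Icc s₁ s₂) = r from rfl, ← hA_def] at hmono
    linarith
  set m : ℝ := max (1 / r) d with hm_def
  have hm1 : 1 / r ≤ m := le_max_left _ _
  have hm2 : d ≤ m := le_max_right _ _
  have hmr : 1 ≤ m * r := by
    have := mul_le_mul_of_nonneg_right hm1 hr.le
    rwa [one_div, inv_mul_cancel₀ hr.ne'] at this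
  have hmpos : 0 < m := hd.trans_le hm2
  have key2 : ‖v lam‖ ^ 2 ≤ 2 * m * (A + B) := by
    have h3 : r * ‖v lam‖ ^ 2 ≤ r * (2 * m * (A + B)) := by
      have e1 : 2 * A ≤ 2 * (m * r) * A := by nlinarith [mul_nonneg (sub_nonneg.2 hmr) hA]
      have e2 : 2 * (d * B) * r ≤ 2 * (m * r) * B := by
        nlinarith [mul_nonneg (mul_nonneg (sub_nonneg.2 hm2) hB) hr.le]
      nlinarith
    exact le_of_mul_le_mul_left h3 hr
  have hsqrt_max : Real.sqrt m = max (1 / Real.sqrt r) (Real.sqrt d) := by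
    have h1r : 1 / Real.sqrt r = Real.sqrt (1 / r) := by
      rw [one_div, one_div, Real.sqrt_inv]
    rw [h1r, hm_def]
    exact (Monotone.map_max fun a b hab => Real.sqrt_le_sqrt hab)
  calc ‖v lam‖ = Real.sqrt (‖v lam‖ ^ 2) := (Real.sqrt_sq (norm_nonneg _)).symm
    _ ≤ Real.sqrt (2 * m * (A + B)) := Real.sqrt_le_sqrt key2
    _ = Real.sqrt 2 * Real.sqrt m * Real.sqrt (A + B) := by
        rw [Real.sqrt_mul (by positivity), Real.sqrt_mul (by norm_num : (0:ℝ) ≤ 2)]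
    _ = _ := by rw [hsqrt_max]
end

section
/- Let $\chi_{s_1}, \chi_{s_2} > 0$ and $X:[s_1,s_2]\to[0,\infty)$ nondecreasing with $X(s_1)=0$. Define, for $\lambda,\lambda_0\in[s_1,s_2]$, $\hat\kappa(\lambda,\lambda_0) = \frac{(1+\chi_{s_2}(X(s_2)-X(\max(\lambda,\lambda_0))))(1+\chi_{s_1}X(\min(\lambda,\lambda_0)))}{\chi_{s_1}+\chi_{s_2}+\chi_{s_1}\chi_{s_2}X(s_2)}$. Then $\hat\kappa$ satisfies: (i) $\hat\kappa$ is symmetric in $(\lambda,\lambda_0)$; (ii) $\partial_\lambda\hat\kappa(\lambda,\lambda_0) = \frac{\chi_{s_1}}{\chi_\lambda}\hat\kappa(s_1,\lambda_0) - \frac{\mathbf 1_{[\lambda_0,s_2]}(\lambda)}{\chi_\lambda}$ whenever $X$ is differentiable at $\lambda\ne\lambda_0$ with $X'(\lambda)=1/\chi_\lambda$; and (iii) $\chi_{s_1}\hat\kappa(s_1,\lambda_0) + \chi_{s_2}\hat\kappa(s_2,\lambda_0) = 1$. -/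
/-- the explicit solution `κ̂` for the kernel of `𝕎` when `ρ = δ_{s₁} + δ_{s₂}`:
it is symmetric, satisfies the first-order ODE
`∂_λ κ̂(λ,λ₀) = (χ_{s₁}/χ_λ) κ̂(s₁,λ₀) - 1_{[λ₀,s₂]}(λ)/χ_λ` away from `λ₀`
(where `X'(λ) = 1/χ_λ`), and satisfies the constraint
`χ_{s₁} κ̂(s₁,λ₀) + χ_{s₂} κ̂(s₂,λ₀) = 1`. -/
theorem stmt16 (s₁ s₂ : ℝ) (hs : s₁ < s₂)
    (χs₁ χs₂ : ℝ) (hχ1 : 0 < χs₁) (hχ2 : 0 < χs₂)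
    (X : ℝ → ℝ) (hX : MonotoneOn X (Set.Icc s₁ s₂)) (hX0 : X s₁ = 0)
    (κ : ℝ → ℝ → ℝ)
    (hκ : ∀ lam lam₀, κ lam lam₀ =
      (1 + χs₂ * (X s₂ - X (max lam lam₀))) * (1 + χs₁ * X (min lam lam₀)) /
        (χs₁ + χs₂ + χs₁ * χs₂ * X s₂)) :
    (∀ lam lam₀, κ lam lam₀ = κ lam₀ lam) ∧
    (∀ lam lam₀, lam ∈ Set.Icc s₁ s₂ → lam₀ ∈ Set.Icc s₁ s₂ → lam ≠ lam₀ →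
      ∀ χlam : ℝ, HasDerivAt X (1 / χlam) lam →
        HasDerivAt (fun l => κ l lam₀)
          (χs₁ / χlam * κ s₁ lam₀ - (if lam ∈ Set.Icc lam₀ s₂ then 1 else 0) / χlam) lam) ∧
    (∀ lam₀ ∈ Set.Icc s₁ s₂, χs₁ * κ s₁ lam₀ + χs₂ * κ s₂ lam₀ = 1) := by
  have hXs₂ : 0 ≤ X s₂ := by
    have := hX ⟨le_refl _, hs.le⟩ ⟨hs.le, le_refl _⟩ hs.le
    linarith [hX0 ▸ this]
  set D : ℝ := χs₁ + χs₂ + χs₁ * χs₂ * X s₂ with hD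
  have hDpos : 0 < D := by positivity
  have hκs₁ : ∀ lam₀ ∈ Set.Icc s₁ s₂,
      κ s₁ lam₀ = (1 + χs₂ * (X s₂ - X lam₀)) / D := by
    intro lam₀ h₀
    rw [hκ, max_eq_right h₀.1, min_eq_left h₀.1, hX0]; ring
  have hκs₂ : ∀ lam₀ ∈ Set.Icc s₁ s₂,
      κ s₂ lam₀ = (1 + χs₁ * X lam₀) / D := by
    intro lam₀ h₀
    rw [hκ, max_eq_left h₀.2, min_eq_right h₀.2]; ring
  refine ⟨?_, ?_, ?_⟩
  · intro lam lam₀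
    rw [hκ, hκ, max_comm, min_comm]
  · intro lam lam₀ hlam hlam₀ hne χlam hX'
    rcases hne.lt_or_gt with h | h
    · -- lam < lam₀
      have hev : (fun l => κ l lam₀) =ᶠ[nhds lam]
          (fun l => (1 + χs₂ * (X s₂ - X lam₀)) * (1 + χs₁ * X l) / D) := by
        filter_upwards [Iio_mem_nhds h] with l hl
        rw [hκ, max_eq_right hl.le, min_eq_left hl.le]
      have hd : HasDerivAt
          (fun l => (1 + χs₂ * (X s₂ - X lam₀)) * (1 + χs₁ * X l) / D)
          ((1 + χs₂ * (X s₂ - X lam₀)) * (χs₁ * (1 / χlam)) / D) lam :=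
        (((hX'.const_mul χs₁).const_add 1).const_mul _).div_const _
      have hd' := hd.congr_of_eventuallyEq hev
      refine hd'.congr_deriv ?_
      rw [if_neg (fun hmem => absurd hmem.1 (not_le.2 h)), hκs₁ lam₀ hlam₀]
      ring
    · -- lam₀ < lam
      have hev : (fun l => κ l lam₀) =ᶠ[nhds lam]
          (fun l => ((1 + χs₂ * X s₂) - χs₂ * X l) * (1 + χs₁ * X lam₀) / D) := by
        filter_upwards [Ioi_mem_nhds h] with l hl
        rw [hκ, max_eq_left hl.le, min_eq_right hl.le]; ring_nf
      have hd : HasDerivAt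
          (fun l => ((1 + χs₂ * X s₂) - χs₂ * X l) * (1 + χs₁ * X lam₀) / D)
          ((-(χs₂ * (1 / χlam))) * (1 + χs₁ * X lam₀) / D) lam :=
        (((hX'.const_mul χs₂).const_sub _).mul_const _).div_const _
      have hd' := hd.congr_of_eventuallyEq hev
      refine hd'.congr_deriv ?_
      rw [if_pos ⟨h.le, hlam.2⟩, hκs₁ lam₀ hlam₀]
      rcases eq_or_ne χlam 0 with rfl | hχ
      · simp
      · field_simp
        ring
  · intro lam₀ h₀
    rw [hκs₁ lam₀ h₀, hκs₂ lam₀ h₀]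
    field_simp
    ring
end
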